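/- For every L-sentence φ, the set {n : ℕ | 𝔅ₙ ⊨ φ} is finite or cofinite (i.e., it is finite or its complement in ℕ is finite). In other words, the truth value of every closed first-order formula about boolean algebras of finite sets is determined by a finite or cofinite set of possible cardinalities of the underlying finite set. -/

import Mathlib

open FirstOrder

/-- The relation symbols of the language with a single binary relation `⊑`. -/
inductive SubsetRel : ℕ → Type
  | sub : SubsetRel 2

/-- The first-order language whose only symbol is a single binary relation `⊑`. -/
def LBA : FirstOrder.Language := ⟨fun _ => Empty, SubsetRel⟩

/-- The structure `𝔅ₙ`: the powerset of `Fin n`, interpreting `⊑` as inclusion `⊆`. -/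
def powBA (n : ℕ) : LBA.Structure (Set (Fin n)) where
  funMap := fun f _ => f.elim
  RelMap := fun r v =>
    match r with
    | .sub => v 0 ⊆ v 1

attribute [local instance] powBA

namespace BAaux

open FirstOrder.Language Set

/-- The cell of a tuple of sets determined by a sign pattern `s`. -/
def cell {n l : ℕ} (v : Fin l → Set (Fin n)) (s : Fin l → Bool) : Set (Fin n) :=
  {z | ∀ i, z ∈ v i ↔ s i = true}

lemma mem_cell {n l : ℕ} {v : Fin l → Set (Fin n)} {s : Fin l → Bool} {z : Fin n} :
    z ∈ cell v s ↔ ∀ i, (z ∈ v i ↔ s i = true) := Iff.rfl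

lemma cell_eq_of_mem {n l : ℕ} {v : Fin l → Set (Fin n)} {s s' : Fin l → Bool} {z : Fin n}
    (h : z ∈ cell v s) (h' : z ∈ cell v s') : s = s' := by
  funext i
  rw [Bool.eq_iff_iff]
  exact ((h i).symm.trans (h' i))

/-- The "equal up to threshold `2 ^ k`" relation on natural numbers. -/
def Eqc (k a b : ℕ) : Prop := a = b ∨ (2 ^ k ≤ a ∧ 2 ^ k ≤ b)

lemma Eqc.symm {k a b : ℕ} (h : Eqc k a b) : Eqc k b a := by
  rcases h with h | h
  · exact Or.inl h.symm
  · exact Or.inr ⟨h.2, h.1⟩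

lemma Eqc.mono {k k' a b : ℕ} (hk : k' ≤ k) (h : Eqc k a b) : Eqc k' a b := by
  rcases h with h | h
  · exact Or.inl h
  · exact Or.inr ⟨le_trans (Nat.pow_le_pow_right (by norm_num) hk) h.1,
      le_trans (Nat.pow_le_pow_right (by norm_num) hk) h.2⟩

lemma Eqc.zero_iff {k a b : ℕ} (h : Eqc k a b) : a = 0 ↔ b = 0 := by
  rcases h.mono (Nat.zero_le k) with h | h
  · rw [h]
  · simp only [pow_zero] at h
    omega

/-- Quantifier depth of a bounded formula. -/
def depth : {l : ℕ} → LBA.BoundedFormula Empty l → ℕ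
  | _, .falsum => 0
  | _, .equal _ _ => 0
  | _, .rel _ _ => 0
  | _, .imp f g => max (depth f) (depth g)
  | _, .all f => depth f + 1

lemma term_eq_var {l : ℕ} (t : LBA.Term (Empty ⊕ Fin l)) :
    ∃ i : Fin l, t = Language.Term.var (Sum.inr i) := by
  cases t with
  | var x =>
    cases x with
    | inl e => exact e.elim
    | inr i => exact ⟨i, rfl⟩
  | func f ts => exact f.elim

lemma subset_iff_cells {n l : ℕ} (v : Fin l → Set (Fin n)) (i j : Fin l) :
    v i ⊆ v j ↔ ∀ s : Fin l → Bool, s i = true → s j = false → cell v s = ∅ := by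
  classical
  constructor
  · intro hsub s hi hj
    rw [Set.eq_empty_iff_forall_notMem]
    intro z hz
    have hzi : z ∈ v i := (hz i).mpr hi
    have hzj : z ∈ v j := hsub hzi
    rw [(hz j), hj] at hzj
    exact absurd hzj (by simp)
  · intro h z hz
    by_contra hz'
    set s : Fin l → Bool := fun i' => decide (z ∈ v i') with hs
    have hmem : z ∈ cell v s := by
      intro i'
      simp [hs]
    have hi : s i = true := by simp [hs, hz]
    have hj : s j = false := by simp [hs, hz']
    rw [h s hi hj] at hmem
    exact hmem

lemma cell_snoc {n l : ℕ} (v : Fin l → Set (Fin n)) (x : Set (Fin n))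
    (s : Fin (l + 1) → Bool) :
    cell (Fin.snoc v x) s =
      if s (Fin.last l) then cell v (fun i => s i.castSucc) ∩ x
      else cell v (fun i => s i.castSucc) \ x := by
  ext z
  by_cases hlast : s (Fin.last l) = true
  · simp only [hlast, if_pos, mem_inter_iff, mem_cell]
    constructor
    · intro h
      refine ⟨fun i => ?_, ?_⟩
      · have := h i.castSucc; rwa [Fin.snoc_castSucc] at this
      · have := h (Fin.last l); rw [Fin.snoc_last] at this; exact this.mpr hlast
    · rintro ⟨h1, h2⟩ i
      refine Fin.lastCases ?_ (fun i => ?_) i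
      · rw [Fin.snoc_last]; exact ⟨fun _ => hlast, fun _ => h2⟩
      · rw [Fin.snoc_castSucc]; exact h1 i
  · simp only [hlast, if_neg, Bool.not_eq_true, mem_diff, mem_cell]
    rw [Bool.not_eq_true] at hlast
    constructor
    · intro h
      refine ⟨fun i => ?_, ?_⟩
      · have := h i.castSucc; rwa [Fin.snoc_castSucc] at this
      · have := h (Fin.last l); rw [Fin.snoc_last] at this
        intro hx
        have := this.mp hx
        rw [hlast] at this
        exact absurd this (by simp)
    · rintro ⟨h1, h2⟩ i
      refine Fin.lastCases ?_ (fun i => ?_) i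
      · rw [Fin.snoc_last]
        constructor
        · intro hx; exact absurd hx h2
        · intro hc; rw [hlast] at hc; exact absurd hc (by simp)
      · rw [Fin.snoc_castSucc]; exact h1 i

/-- The arithmetic heart of the EF argument: splitting a size that matches at
threshold `2 ^ (k + 1)` into two pieces matching at threshold `2 ^ k`. -/
lemma arith {k a1 a2 c : ℕ} (h : Eqc (k + 1) (a1 + a2) c) :
    (if a1 < 2 ^ k then min a1 c else c - min a2 (2 ^ k)) ≤ c ∧
    Eqc k a1 (if a1 < 2 ^ k then min a1 c else c - min a2 (2 ^ k)) ∧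
    Eqc k a2 (c - (if a1 < 2 ^ k then min a1 c else c - min a2 (2 ^ k))) := by
  have hp : 0 < 2 ^ k := Nat.pow_pos (by norm_num)
  have hpow : 2 ^ (k + 1) = 2 ^ k + 2 ^ k := by ring
  rcases h with h | h
  · rcases Nat.lt_or_ge a1 (2 ^ k) with h1 | h1
    · rw [if_pos h1]
      refine ⟨min_le_right _ _, ?_, ?_⟩
      · exact Or.inl (by omega)
      · exact Or.inl (by omega)
    · rw [if_neg (by omega)]
      rcases le_or_gt a2 (2 ^ k) with h2 | h2
      · rw [min_eq_left h2]
        exact ⟨Nat.sub_le _ _, Or.inl (by omega), Or.inl (by omega)⟩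
      · rw [min_eq_right (le_of_lt h2)]
        refine ⟨Nat.sub_le _ _, Or.inr ⟨h1, by omega⟩, Or.inr ⟨le_of_lt h2, by omega⟩⟩
  · obtain ⟨hab, hc⟩ := h
    rw [hpow] at hab hc
    rcases Nat.lt_or_ge a1 (2 ^ k) with h1 | h1
    · rw [if_pos h1, min_eq_left (by omega)]
      exact ⟨by omega, Or.inl rfl, Or.inr ⟨by omega, by omega⟩⟩
    · rw [if_neg (by omega)]
      rcases le_or_gt a2 (2 ^ k) with h2 | h2
      · rw [min_eq_left h2]
        refine ⟨Nat.sub_le _ _, Or.inr ⟨h1, by omega⟩, ?_⟩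
        have : c - (c - a2) = a2 := by omega
        rw [this]
        exact Or.inl rfl
      · rw [min_eq_right (le_of_lt h2)]
        refine ⟨Nat.sub_le _ _, Or.inr ⟨h1, by omega⟩, Or.inr ⟨le_of_lt h2, by omega⟩⟩

/-- The back-and-forth step: any choice of a new set on one side can be matched on
the other side, preserving cell-size equivalence at one lower threshold. -/
lemma step {k n m l : ℕ} (v : Fin l → Set (Fin n)) (w : Fin l → Set (Fin m))
    (h : ∀ s, Eqc (k + 1) (cell v s).ncard (cell w s).ncard) (x : Set (Fin n)) :
    ∃ y : Set (Fin m), ∀ s : Fin (l + 1) → Bool,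
      Eqc k (cell (Fin.snoc v x) s).ncard (cell (Fin.snoc w y) s).ncard := by
  classical
  set a1 : (Fin l → Bool) → ℕ := fun s => (cell v s ∩ x).ncard with ha1
  set a2 : (Fin l → Bool) → ℕ := fun s => (cell v s \ x).ncard with ha2
  set c : (Fin l → Bool) → ℕ := fun s => (cell w s).ncard with hc
  have hsum : ∀ s, a1 s + a2 s = (cell v s).ncard := fun s =>
    Set.ncard_inter_add_ncard_diff_eq_ncard (cell v s) x (Set.toFinite _)
  have harith : ∀ s, (if a1 s < 2 ^ k then min (a1 s) (c s) else c s - min (a2 s) (2 ^ k)) ≤ c s ∧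
      Eqc k (a1 s) (if a1 s < 2 ^ k then min (a1 s) (c s) else c s - min (a2 s) (2 ^ k)) ∧
      Eqc k (a2 s) (c s - (if a1 s < 2 ^ k then min (a1 s) (c s)
        else c s - min (a2 s) (2 ^ k))) := by
    intro s
    refine arith ?_
    rw [hsum s]
    exact h s
  set b : (Fin l → Bool) → ℕ :=
    fun s => if a1 s < 2 ^ k then min (a1 s) (c s) else c s - min (a2 s) (2 ^ k) with hb
  choose T hTsub hTcard using fun s => Set.exists_subset_card_eq ((harith s).1)
  refine ⟨⋃ s, T s, ?_⟩
  intro s'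
  set s : Fin l → Bool := fun i => s' i.castSucc with hsdef
  have hinter : cell w s ∩ (⋃ s'', T s'') = T s := by
    apply Set.Subset.antisymm
    · rintro z ⟨hz1, hz2⟩
      rw [Set.mem_iUnion] at hz2
      obtain ⟨s'', hz3⟩ := hz2
      have : z ∈ cell w s'' := hTsub s'' hz3
      rwa [cell_eq_of_mem hz1 this]
    · intro z hz
      exact ⟨hTsub s hz, Set.mem_iUnion.mpr ⟨s, hz⟩⟩
  have hdiff : cell w s \ (⋃ s'', T s'') = cell w s \ T s := by
    apply Set.Subset.antisymm
    · rintro z ⟨hz1, hz2⟩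
      exact ⟨hz1, fun hz3 => hz2 (Set.mem_iUnion.mpr ⟨s, hz3⟩)⟩
    · rintro z ⟨hz1, hz2⟩
      refine ⟨hz1, fun hz3 => ?_⟩
      rw [Set.mem_iUnion] at hz3
      obtain ⟨s'', hz4⟩ := hz3
      have : z ∈ cell w s'' := hTsub s'' hz4
      rw [cell_eq_of_mem hz1 this] at hz2
      exact hz2 hz4
  have hcard_diff : (cell w s \ T s).ncard = c s - b s := by
    rw [Set.ncard_diff (hTsub s) (Set.toFinite _), hTcard s]
  rw [cell_snoc v x s', cell_snoc w (⋃ s'', T s'') s']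
  by_cases hlast : s' (Fin.last l) = true
  · rw [if_pos hlast, if_pos hlast, ← hsdef, hinter, hTcard s]
    exact (harith s).2.1
  · rw [if_neg hlast, if_neg hlast, ← hsdef, hdiff, hcard_diff]
    exact (harith s).2.2

/-- Main lemma: tuples with equivalent cell-size profiles (at threshold
`2 ^ depth φ`) satisfy the same formulas. -/
lemma main {l : ℕ} (φ : LBA.BoundedFormula Empty l) :
    ∀ {n m : ℕ} (v : Fin l → Set (Fin n)) (w : Fin l → Set (Fin m)),
      (∀ s, Eqc (depth φ) (cell v s).ncard (cell w s).ncard) →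
      (φ.Realize Empty.elim v ↔ φ.Realize Empty.elim w) := by
  induction φ with
  | falsum =>
    intro n m v w _
    simp [Language.BoundedFormula.Realize]
  | equal t₁ t₂ =>
    intro n m v w h
    obtain ⟨i, rfl⟩ := term_eq_var t₁
    obtain ⟨j, rfl⟩ := term_eq_var t₂
    have hcell : ∀ s, (cell v s = ∅ ↔ cell w s = ∅) := by
      intro s
      rw [← Set.ncard_eq_zero (Set.toFinite _), ← Set.ncard_eq_zero (Set.toFinite _)]
      exact (h s).zero_iff
    simp only [Language.BoundedFormula.Realize, Language.Term.realize_var, Sum.elim_inr]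
    rw [Set.Subset.antisymm_iff, Set.Subset.antisymm_iff,
      subset_iff_cells v i j, subset_iff_cells v j i,
      subset_iff_cells w i j, subset_iff_cells w j i]
    constructor
    · rintro ⟨h1, h2⟩
      exact ⟨fun s hi hj => (hcell s).mp (h1 s hi hj), fun s hi hj => (hcell s).mp (h2 s hi hj)⟩
    · rintro ⟨h1, h2⟩
      exact ⟨fun s hi hj => (hcell s).mpr (h1 s hi hj), fun s hi hj => (hcell s).mpr (h2 s hi hj)⟩
  | rel R ts =>
    intro n m v w h
    cases R with
    | sub =>
      obtain ⟨i, hi⟩ := term_eq_var (ts 0)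
      obtain ⟨j, hj⟩ := term_eq_var (ts 1)
      have hcell : ∀ s, (cell v s = ∅ ↔ cell w s = ∅) := by
        intro s
        rw [← Set.ncard_eq_zero (Set.toFinite _), ← Set.ncard_eq_zero (Set.toFinite _)]
        exact (h s).zero_iff
      have hrv : (Language.BoundedFormula.rel (L := LBA) (α := Empty)
          SubsetRel.sub ts).Realize Empty.elim v ↔ v i ⊆ v j := by
        simp only [Language.BoundedFormula.Realize]
        show ((ts 0).realize (M := Set (Fin n)) _ ⊆ (ts 1).realize (M := Set (Fin n)) _) ↔ _
        rw [hi, hj]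
        simp [Language.Term.realize_var]
      have hrw : (Language.BoundedFormula.rel (L := LBA) (α := Empty)
          SubsetRel.sub ts).Realize Empty.elim w ↔ w i ⊆ w j := by
        simp only [Language.BoundedFormula.Realize]
        show ((ts 0).realize (M := Set (Fin m)) _ ⊆ (ts 1).realize (M := Set (Fin m)) _) ↔ _
        rw [hi, hj]
        simp [Language.Term.realize_var]
      rw [hrv, hrw, subset_iff_cells v i j, subset_iff_cells w i j]
      constructor
      · exact fun h1 s hi' hj' => (hcell s).mp (h1 s hi' hj')
      · exact fun h1 s hi' hj' => (hcell s).mpr (h1 s hi' hj')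
  | imp f g ihf ihg =>
    intro n m v w h
    have hf := ihf v w fun s => (h s).mono (le_max_left _ _)
    have hg := ihg v w fun s => (h s).mono (le_max_right _ _)
    simp only [Language.BoundedFormula.realize_imp]
    rw [hf, hg]
  | all f ih =>
    intro n m v w h
    simp only [Language.BoundedFormula.realize_all]
    constructor
    · intro hall y
      obtain ⟨x, hx⟩ := step w v (fun s => (h s).symm) y
      exact (ih (Fin.snoc v x) (Fin.snoc w y) fun s => (hx s).symm).mp (hall x)
    · intro hall x
      obtain ⟨y, hy⟩ := step v w h x
      exact (ih (Fin.snoc v x) (Fin.snoc w y) hy).mpr (hall y)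

lemma sentence_iff (φ : LBA.Sentence) {n m : ℕ} (hn : 2 ^ depth φ ≤ n)
    (hm : 2 ^ depth φ ≤ m) :
    (@FirstOrder.Language.Sentence.Realize LBA (Set (Fin n)) (powBA n) φ ↔
      @FirstOrder.Language.Sentence.Realize LBA (Set (Fin m)) (powBA m) φ) := by
  have h := main φ (n := n) (m := m) default default ?_
  · unfold Language.Sentence.Realize Language.Formula.Realize
    convert h using 2
  · intro s
    have h1 : cell (default : Fin 0 → Set (Fin n)) s = Set.univ := by
      rw [Set.eq_univ_iff_forall]
      intro z i
      exact i.elim0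
    have h2 : cell (default : Fin 0 → Set (Fin m)) s = Set.univ := by
      rw [Set.eq_univ_iff_forall]
      intro z i
      exact i.elim0
    rw [h1, h2, Set.ncard_univ, Set.ncard_univ, Nat.card_eq_fintype_card,
      Nat.card_eq_fintype_card, Fintype.card_fin, Fintype.card_fin]
    exact Or.inr ⟨hn, hm⟩

end BAaux

/-- For every sentence `φ` of the language of one binary relation, the set of `n`
such that `𝔅ₙ ⊨ φ` (powerset of an `n`-element set with inclusion) is finite or
cofinite. -/
theorem finite_or_cofinite_of_sentence (φ : LBA.Sentence) :
    {n : ℕ | @FirstOrder.Language.Sentence.Realize LBA (Set (Fin n)) (powBA n) φ}.Finite ∨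
    ({n : ℕ | @FirstOrder.Language.Sentence.Realize LBA (Set (Fin n)) (powBA n) φ}ᶜ).Finite := by
  set N := 2 ^ BAaux.depth φ with hN
  by_cases hphi : @FirstOrder.Language.Sentence.Realize LBA (Set (Fin N)) (powBA N) φ
  · right
    apply Set.Finite.subset (Set.finite_Iio N)
    intro n hn
    simp only [Set.mem_compl_iff, Set.mem_setOf_eq] at hn
    simp only [Set.mem_Iio]
    by_contra hge
    push_neg at hge
    exact hn ((BAaux.sentence_iff φ le_rfl hge).mp hphi)
  · left
    apply Set.Finite.subset (Set.finite_Iio N)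
    intro n hn
    simp only [Set.mem_setOf_eq] at hn
    simp only [Set.mem_Iio]
    by_contra hge
    push_neg at hge
    exact hphi ((BAaux.sentence_iff φ hge le_rfl).mp hn)
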